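/- Assume that the cost per stage g is bounded over X×U×W and that there exists a uniformly proper policy. If {J_k} is the sequence generated by the value iteration algorithm J_{k+1}(x) = inf_{u ∈ U(x)} E_{w~P(·|x,u)}[ g(x,u,w) + J_k(f(x,u,w)) ] starting from any J₀ ∈ B with J₀ ≥ Ĵ, then J_k(x) → Ĵ(x) for every x ∈ X. -/

import Mathlib

open scoped ENNReal
open Filter
open scoped Classical NNReal

/-- A stochastic shortest path (SSP) problem with state space `X`, control space `U`,
countable disturbance space `W`, a cost-free absorbing termination state `t`,
nonempty control constraint sets `Uc x ⊆ U`, disturbance distributions `P x u`,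
system function `f`, and nonnegative (finite-valued) cost per stage `g`. -/
structure SSP (X U W : Type*) [Countable W] where
  t : X
  Uc : X → Set U
  Uc_nonempty : ∀ x, (Uc x).Nonempty
  P : X → U → PMF W
  f : X → U → W → X
  g : X → U → W → ℝ≥0∞
  g_lt_top : ∀ x u w, g x u w < ⊤
  f_absorb : ∀ u ∈ Uc t, ∀ w, f t u w = t
  g_zero : ∀ u ∈ Uc t, ∀ w, g t u w = 0

namespace SSP

variable {X U W : Type*} [Countable W] (S : SSP X U W)

/-- A policy `π = (μ₀, μ₁, …)` is admissible if `μ_k(x) ∈ U(x)` for all `k, x`. -/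
def IsPolicy (π : ℕ → X → U) : Prop := ∀ k x, π k x ∈ S.Uc x

/-- Distribution of the state `x_k` after `k` steps under policy `π` starting from `x₀`. -/
noncomputable def stateDist (π : ℕ → X → U) (x₀ : X) : ℕ → PMF X
  | 0 => PMF.pure x₀
  | k + 1 => (stateDist π x₀ k).bind fun x => (S.P x (π k x)).map (S.f x (π k x))

/-- Expected value `E^π_{x₀}[J(x_k)]` of a nonnegative function along the trajectory. -/
noncomputable def expect (π : ℕ → X → U) (x₀ : X) (k : ℕ) (J : X → ℝ≥0∞) : ℝ≥0∞ :=
  ∑' x, S.stateDist π x₀ k x * J x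

/-- Expected cost `E^π_{x₀}[g(x_k, μ_k(x_k), w_k)]` of the `k`-th stage. -/
noncomputable def stageCost (π : ℕ → X → U) (x₀ : X) (k : ℕ) : ℝ≥0∞ :=
  S.expect π x₀ k fun x => ∑' w, S.P x (π k x) w * S.g x (π k x) w

/-- The cost `J_π(x₀) = Σ_{k≥0} E^π_{x₀}[g(x_k, μ_k(x_k), w_k)]` of a policy. -/
noncomputable def Jcost (π : ℕ → X → U) (x₀ : X) : ℝ≥0∞ :=
  ∑' k, S.stageCost π x₀ k

/-- `r_k(π, x₀)`: probability that `x_k ≠ t` under `π` starting from `x₀`. -/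
noncomputable def r (π : ℕ → X → U) (x₀ : X) (k : ℕ) : ℝ≥0∞ :=
  S.expect π x₀ k fun x => if x = S.t then 0 else 1

/-- `Σ_{k≥0} r_k(π,x₀)`: expected number of steps to reach the destination. -/
noncomputable def N (π : ℕ → X → U) (x₀ : X) : ℝ≥0∞ := ∑' k, S.r π x₀ k

/-- A policy is proper at `x` if it is admissible, `J_π(x) < ∞` and `Σ_k r_k(π,x) < ∞`. -/
def ProperAt (π : ℕ → X → U) (x : X) : Prop :=
  S.IsPolicy π ∧ S.Jcost π x < ⊤ ∧ S.N π x < ⊤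

/-- The optimal cost function `J*`. -/
noncomputable def Jstar (x : X) : ℝ≥0∞ := ⨅ π ∈ {π | S.IsPolicy π}, S.Jcost π x

/-- The restricted optimal cost function `Ĵ` over policies proper at `x`
(infimum over the empty set is `∞`). -/
noncomputable def Jhat (x : X) : ℝ≥0∞ := ⨅ π ∈ {π | S.ProperAt π x}, S.Jcost π x

/-- The effective domain `X̂ = {x | Ĵ(x) < ∞}` of `Ĵ`. -/
def Xhat : Set X := {x | S.Jhat x < ⊤}

/-- Expected `k`-th stage cost in the `δ`-perturbed problem (stage cost `g + δ` off `t`). -/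
noncomputable def stageCostPert (δ : ℝ≥0∞) (π : ℕ → X → U) (x₀ : X) (k : ℕ) : ℝ≥0∞ :=
  S.expect π x₀ k fun x =>
    ∑' w, S.P x (π k x) w * (S.g x (π k x) w + if x = S.t then 0 else δ)

/-- The cost `J_{π,δ}` of a policy in the `δ`-perturbed problem. -/
noncomputable def Jpert (δ : ℝ≥0∞) (π : ℕ → X → U) (x₀ : X) : ℝ≥0∞ :=
  ∑' k, S.stageCostPert δ π x₀ k

/-- The optimal cost function `Ĵ_δ` of the `δ`-perturbed problem. -/
noncomputable def JhatPert (δ : ℝ≥0∞) (x : X) : ℝ≥0∞ :=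
  ⨅ π ∈ {π | S.IsPolicy π}, S.Jpert δ π x

/-- `Q J x u = E_{w∼P(·|x,u)}[g(x,u,w) + J(f(x,u,w))]`. -/
noncomputable def Q (J : X → ℝ≥0∞) (x : X) (u : U) : ℝ≥0∞ :=
  ∑' w, S.P x u w * (S.g x u w + J (S.f x u w))

/-- The Bellman operator `(TJ)(x) = inf_{u ∈ U(x)} E[g(x,u,w) + J(f(x,u,w))]`. -/
noncomputable def bellman (J : X → ℝ≥0∞) (x : X) : ℝ≥0∞ := ⨅ u ∈ S.Uc x, S.Q J x u

/-- The tail policy `π_k = (μ_k, μ_{k+1}, …)`. -/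
def tail (π : ℕ → X → U) (k : ℕ) : ℕ → X → U := fun m => π (k + m)

/-- The set `Ŵ` of functions `J` with `J(t) = 0`, `Ĵ ≤ J`, and
`E^π_{x₀}[J(x_k)] → 0` for every pair `(π, x₀)` with `π` proper at `x₀`. -/
def What : Set (X → ℝ≥0∞) :=
  {J | J S.t = 0 ∧ S.Jhat ≤ J ∧
    ∀ π x₀, S.ProperAt π x₀ → Tendsto (fun k => S.expect π x₀ k J) atTop (nhds 0)}

/-- The set `B` of functions `J` with `J(t) = 0` that are bounded over `X̂`. -/
def Bset : Set (X → ℝ≥0∞) :=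
  {J | J S.t = 0 ∧ (⨆ x ∈ S.Xhat, J x) < ⊤}

/-- A policy is uniformly proper if it is admissible and the expected number of steps
to reach the destination is uniformly bounded over `X̂`. -/
def UniformlyProper (π : ℕ → X → U) : Prop :=
  S.IsPolicy π ∧ (⨆ x ∈ S.Xhat, S.N π x) < ⊤

/-- The cost per stage `g` is (uniformly) bounded over `X × U × W`. -/
def BoundedCost : Prop := ∃ b : ℝ≥0∞, b < ⊤ ∧ ∀ x u w, S.g x u w ≤ b

end SSP
namespace SSP

variable {X U W : Type*} [Countable W] (S : SSP X U W)

/-! ### Basic tsum helpers -/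

lemma tsum_pmf_mul_const {α : Type*} (p : PMF α) (c : ℝ≥0∞) : ∑' a, p a * c = c := by
  rw [ENNReal.tsum_mul_right, p.tsum_coe, one_mul]

lemma tsum_map_mul {α β : Type*} (p : PMF α) (φ : α → β) (h : β → ℝ≥0∞) :
    ∑' y, (p.map φ) y * h y = ∑' w, p w * h (φ w) := by
  simp only [PMF.map_apply]
  calc ∑' y, (∑' w, if y = φ w then p w else 0) * h y
      = ∑' y, ∑' w, (if y = φ w then p w * h (φ w) else 0) := by
        refine tsum_congr fun y => ?_
        rw [ENNReal.tsum_mul_right.symm]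
        refine tsum_congr fun w => ?_
        by_cases hy : y = φ w
        · simp [hy]
        · simp [hy]
    _ = ∑' w, ∑' y, (if y = φ w then p w * h (φ w) else 0) := ENNReal.tsum_comm
    _ = ∑' w, p w * h (φ w) := by
        refine tsum_congr fun w => tsum_ite_eq (φ w) _

lemma tsum_bind_mul {α β : Type*} (p : PMF α) (q : α → PMF β) (h : β → ℝ≥0∞) :
    ∑' y, (p.bind q) y * h y = ∑' z, p z * ∑' y, q z y * h y := by
  simp only [PMF.bind_apply]
  calc ∑' y, (∑' z, p z * q z y) * h y
      = ∑' y, ∑' z, p z * q z y * h y := by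
        refine tsum_congr fun y => ENNReal.tsum_mul_right.symm
    _ = ∑' z, ∑' y, p z * q z y * h y := ENNReal.tsum_comm
    _ = ∑' z, p z * ∑' y, q z y * h y := by
        refine tsum_congr fun z => ?_
        rw [← ENNReal.tsum_mul_left]
        exact tsum_congr fun y => mul_assoc _ _ _

/-! ### stateDist and expect -/

lemma stateDist_zero (π : ℕ → X → U) (x : X) : S.stateDist π x 0 = PMF.pure x := rfl

lemma stateDist_succ (π : ℕ → X → U) (x : X) (k : ℕ) :
    S.stateDist π x (k + 1)
      = (S.stateDist π x k).bind fun y => (S.P y (π k y)).map (S.f y (π k y)) := rfl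

lemma stateDist_one (π : ℕ → X → U) (x : X) :
    S.stateDist π x 1 = (S.P x (π 0 x)).map (S.f x (π 0 x)) := by
  show (PMF.pure x).bind _ = _
  rw [PMF.pure_bind]

lemma stateDist_add (π : ℕ → X → U) (x : X) (j k : ℕ) :
    S.stateDist π x (j + k)
      = (S.stateDist π x j).bind fun y => S.stateDist (tail π j) y k := by
  induction k with
  | zero =>
      rw [Nat.add_zero]
      have : (fun y => S.stateDist (tail π j) y 0) = PMF.pure := rfl
      rw [this, PMF.bind_pure]
  | succ k ih =>
      rw [← Nat.add_assoc, stateDist_succ, ih, PMF.bind_bind]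
      rfl

lemma expect_zero (π : ℕ → X → U) (x : X) (J : X → ℝ≥0∞) : S.expect π x 0 J = J x := by
  unfold expect
  rw [stateDist_zero]
  refine (tsum_eq_single x ?_).trans ?_
  · intro y hy; simp [PMF.pure_apply, hy]
  · simp

lemma expect_add (π : ℕ → X → U) (x : X) (j k : ℕ) (J : X → ℝ≥0∞) :
    S.expect π x (j + k) J
      = ∑' y, S.stateDist π x j y * S.expect (tail π j) y k J := by
  unfold expect
  rw [stateDist_add, tsum_bind_mul]

lemma expect_succ (π : ℕ → X → U) (x : X) (k : ℕ) (J : X → ℝ≥0∞) :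
    S.expect π x (k + 1) J
      = ∑' w, S.P x (π 0 x) w * S.expect (tail π 1) (S.f x (π 0 x) w) k J := by
  rw [Nat.add_comm k 1, expect_add, stateDist_one, tsum_map_mul]

lemma expect_mono (π : ℕ → X → U) (x : X) (k : ℕ) {J₁ J₂ : X → ℝ≥0∞} (h : ∀ y, J₁ y ≤ J₂ y) :
    S.expect π x k J₁ ≤ S.expect π x k J₂ :=
  ENNReal.tsum_le_tsum fun y => mul_le_mul_right (h y) _

lemma expect_add_fun (π : ℕ → X → U) (x : X) (k : ℕ) (J₁ J₂ : X → ℝ≥0∞) :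
    S.expect π x k (fun y => J₁ y + J₂ y) = S.expect π x k J₁ + S.expect π x k J₂ := by
  unfold expect
  rw [← ENNReal.tsum_add]
  exact tsum_congr fun y => mul_add _ _ _

lemma expect_ite_const (π : ℕ → X → U) (x : X) (k : ℕ) (c : ℝ≥0∞) :
    S.expect π x k (fun y => if y = S.t then 0 else c) = c * S.r π x k := by
  unfold expect r expect
  rw [← ENNReal.tsum_mul_left]
  refine tsum_congr fun y => ?_
  by_cases hy : y = S.t <;> simp [hy, mul_comm, mul_left_comm]

end SSP
namespace SSP

variable {X U W : Type*} [Countable W] (S : SSP X U W)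

lemma stageCost_zero (π : ℕ → X → U) (x : X) :
    S.stageCost π x 0 = ∑' w, S.P x (π 0 x) w * S.g x (π 0 x) w :=
  S.expect_zero π x _

lemma stageCost_succ (π : ℕ → X → U) (x : X) (k : ℕ) :
    S.stageCost π x (k + 1)
      = ∑' w, S.P x (π 0 x) w * S.stageCost (tail π 1) (S.f x (π 0 x) w) k := by
  have h : S.stageCost π x (k+1) = ∑' w, S.P x (π 0 x) w * S.expect (tail π 1) (S.f x (π 0 x) w) k
      (fun y => ∑' w, S.P y (π (k + 1) y) w * S.g y (π (k + 1) y) w) := S.expect_succ π x k _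
  rw [h]
  refine tsum_congr fun w => ?_
  congr 1
  have h2 : (fun y => ∑' w, S.P y (π (k + 1) y) w * S.g y (π (k + 1) y) w)
      = (fun y => ∑' w, S.P y (tail π 1 k y) w * S.g y (tail π 1 k y) w) := by
    have h3 : tail π 1 k = π (k + 1) := by unfold tail; rw [Nat.add_comm]
    rw [h3]
  rw [h2]
  rfl

lemma stageCostPert_zero (δ : ℝ≥0∞) (π : ℕ → X → U) (x : X) :
    S.stageCostPert δ π x 0
      = ∑' w, S.P x (π 0 x) w * (S.g x (π 0 x) w + if x = S.t then 0 else δ) :=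
  S.expect_zero π x _

lemma stageCostPert_succ (δ : ℝ≥0∞) (π : ℕ → X → U) (x : X) (k : ℕ) :
    S.stageCostPert δ π x (k + 1)
      = ∑' w, S.P x (π 0 x) w * S.stageCostPert δ (tail π 1) (S.f x (π 0 x) w) k := by
  have h : S.stageCostPert δ π x (k+1) = ∑' w, S.P x (π 0 x) w * S.expect (tail π 1) (S.f x (π 0 x) w) k
      (fun y => ∑' w, S.P y (π (k + 1) y) w * (S.g y (π (k + 1) y) w + if y = S.t then 0 else δ)) :=
    S.expect_succ π x k _
  rw [h]
  refine tsum_congr fun w => ?_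
  congr 1
  have h2 : (fun y => ∑' w, S.P y (π (k + 1) y) w * (S.g y (π (k + 1) y) w + if y = S.t then 0 else δ))
      = (fun y => ∑' w, S.P y (tail π 1 k y) w * (S.g y (tail π 1 k y) w + if y = S.t then 0 else δ)) := by
    have h3 : tail π 1 k = π (k + 1) := by unfold tail; rw [Nat.add_comm]
    rw [h3]
  rw [h2]
  rfl

lemma r_succ (π : ℕ → X → U) (x : X) (k : ℕ) :
    S.r π x (k + 1) = ∑' w, S.P x (π 0 x) w * S.r (tail π 1) (S.f x (π 0 x) w) k :=
  S.expect_succ π x k _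

lemma stageCost_tail_tsum (π : ℕ → X → U) (x : X) (k : ℕ) :
    ∑' m, S.stageCost π x (k + m)
      = ∑' y, S.stateDist π x k y * S.Jcost (tail π k) y := by
  calc ∑' m, S.stageCost π x (k + m)
      = ∑' m, ∑' y, S.stateDist π x k y * S.stageCost (tail π k) y m := by
        exact tsum_congr fun m => S.expect_add π x k m _
    _ = ∑' y, ∑' m, S.stateDist π x k y * S.stageCost (tail π k) y m := ENNReal.tsum_comm
    _ = ∑' y, S.stateDist π x k y * S.Jcost (tail π k) y := by
        exact tsum_congr fun y => ENNReal.tsum_mul_left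

lemma r_tail_tsum (π : ℕ → X → U) (x : X) (k : ℕ) :
    ∑' m, S.r π x (k + m) = ∑' y, S.stateDist π x k y * S.N (tail π k) y := by
  calc ∑' m, S.r π x (k + m)
      = ∑' m, ∑' y, S.stateDist π x k y * S.r (tail π k) y m := by
        exact tsum_congr fun m => S.expect_add π x k m _
    _ = ∑' y, ∑' m, S.stateDist π x k y * S.r (tail π k) y m := ENNReal.tsum_comm
    _ = ∑' y, S.stateDist π x k y * S.N (tail π k) y := by
        exact tsum_congr fun y => ENNReal.tsum_mul_left

lemma tail_isPolicy {π : ℕ → X → U} (hπ : S.IsPolicy π) (k : ℕ) : S.IsPolicy (tail π k) :=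
  fun m z => hπ (k + m) z

lemma tsum_shift_le (a : ℕ → ℝ≥0∞) (k : ℕ) : ∑' m, a (k + m) ≤ ∑' n, a n :=
  ENNReal.tsum_comp_le_tsum_of_injective (add_right_injective k) a

lemma tail_properAt {π : ℕ → X → U} {x y : X} {k : ℕ} (hp : S.ProperAt π x)
    (hd : S.stateDist π x k y ≠ 0) : S.ProperAt (tail π k) y := by
  obtain ⟨hπ, hJ, hN⟩ := hp
  have hkey : ∀ (c : ℝ≥0∞), S.stateDist π x k y * c ≠ ⊤ → c ≠ ⊤ := by
    intro c hc hctop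
    rw [hctop, ENNReal.mul_top hd] at hc
    exact hc rfl
  refine ⟨S.tail_isPolicy hπ k, ?_, ?_⟩
  · have h1 : S.stateDist π x k y * S.Jcost (tail π k) y ≤ S.Jcost π x := by
      calc S.stateDist π x k y * S.Jcost (tail π k) y
          ≤ ∑' y', S.stateDist π x k y' * S.Jcost (tail π k) y' := ENNReal.le_tsum y
        _ = ∑' m, S.stageCost π x (k + m) := (S.stageCost_tail_tsum π x k).symm
        _ ≤ S.Jcost π x := tsum_shift_le _ k
    exact lt_top_iff_ne_top.2 (hkey _ (lt_top_iff_ne_top.1 (lt_of_le_of_lt h1 hJ)))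
  · have h1 : S.stateDist π x k y * S.N (tail π k) y ≤ S.N π x := by
      calc S.stateDist π x k y * S.N (tail π k) y
          ≤ ∑' y', S.stateDist π x k y' * S.N (tail π k) y' := ENNReal.le_tsum y
        _ = ∑' m, S.r π x (k + m) := (S.r_tail_tsum π x k).symm
        _ ≤ S.N π x := tsum_shift_le _ k
    exact lt_top_iff_ne_top.2 (hkey _ (lt_top_iff_ne_top.1 (lt_of_le_of_lt h1 hN)))

lemma Q_mono {J₁ J₂ : X → ℝ≥0∞} (h : ∀ y, J₁ y ≤ J₂ y) (x : X) (u : U) :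
    S.Q J₁ x u ≤ S.Q J₂ x u :=
  ENNReal.tsum_le_tsum fun w => mul_le_mul_right (add_le_add_right (h _) _) _

end SSP
namespace SSP

variable {X U W : Type*} [Countable W] (S : SSP X U W)

/-- The key upper bound for value iteration: `T^k J₀ ≤` the `k`-stage cost of any policy
plus the expected terminal cost. -/
lemma VI_upper (Jseq : ℕ → X → ℝ≥0∞) (hVI : ∀ k x, Jseq (k + 1) x = S.bellman (Jseq k) x) :
    ∀ (k : ℕ) (π : ℕ → X → U), S.IsPolicy π → ∀ x,
      Jseq k x ≤ ∑ m ∈ Finset.range k, S.stageCost π x m + S.expect π x k (Jseq 0) := by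
  intro k
  induction k with
  | zero => intro π hπ x; simp [S.expect_zero]
  | succ k ih =>
      intro π hπ x
      have h1 : Jseq (k + 1) x ≤ S.Q (Jseq k) x (π 0 x) := by
        rw [hVI k x]
        exact iInf₂_le (π 0 x) (hπ 0 x)
      have h2 : S.Q (Jseq k) x (π 0 x) ≤ S.Q
          (fun y => ∑ m ∈ Finset.range k, S.stageCost (tail π 1) y m
            + S.expect (tail π 1) y k (Jseq 0)) x (π 0 x) :=
        S.Q_mono (fun y => ih (tail π 1) (S.tail_isPolicy hπ 1) y) x (π 0 x)
      refine (h1.trans h2).trans (le_of_eq ?_)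
      unfold Q
      set u := π 0 x with hu
      have e1 : ∑' w, S.P x u w * ∑ m ∈ Finset.range k, S.stageCost (tail π 1) (S.f x u w) m
          = ∑ m ∈ Finset.range k, S.stageCost π x (m + 1) := by
        rw [tsum_congr (fun w => Finset.mul_sum (Finset.range k)
              (fun m => S.stageCost (tail π 1) (S.f x u w) m) (S.P x u w)),
            Summable.tsum_finsetSum (fun (m : ℕ) (_ : m ∈ Finset.range k) => ENNReal.summable)]
        exact Finset.sum_congr rfl fun m _ => (S.stageCost_succ π x m).symm
      calc ∑' w, S.P x u w * (S.g x u w + (∑ m ∈ Finset.range k,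
              S.stageCost (tail π 1) (S.f x u w) m + S.expect (tail π 1) (S.f x u w) k (Jseq 0)))
          = (∑' w, S.P x u w * S.g x u w)
            + ((∑' w, S.P x u w * ∑ m ∈ Finset.range k, S.stageCost (tail π 1) (S.f x u w) m)
            + (∑' w, S.P x u w * S.expect (tail π 1) (S.f x u w) k (Jseq 0))) := by
            rw [← ENNReal.tsum_add, ← ENNReal.tsum_add]
            exact tsum_congr fun w => by rw [← mul_add, ← mul_add]
        _ = ∑ m ∈ Finset.range (k + 1), S.stageCost π x m + S.expect π x (k + 1) (Jseq 0) := by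
            rw [e1, ← S.stageCost_zero π x, ← S.expect_succ π x k (Jseq 0),
              Finset.sum_range_succ' (fun m => S.stageCost π x m) k]
            ring

lemma Jpert_step (δ : ℝ≥0∞) (σ : ℕ → X → U) (x : X) :
    S.Jpert δ σ x = ∑' w, S.P x (σ 0 x) w *
      (S.g x (σ 0 x) w + (if x = S.t then 0 else δ) + S.Jpert δ (tail σ 1) (S.f x (σ 0 x) w)) := by
  unfold Jpert
  rw [tsum_eq_zero_add' ENNReal.summable]
  have h1 : ∑' k, S.stageCostPert δ σ x (k + 1)
      = ∑' w, S.P x (σ 0 x) w * S.Jpert δ (tail σ 1) (S.f x (σ 0 x) w) := by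
    calc ∑' k, S.stageCostPert δ σ x (k + 1)
        = ∑' k, ∑' w, S.P x (σ 0 x) w * S.stageCostPert δ (tail σ 1) (S.f x (σ 0 x) w) k := by
          exact tsum_congr fun k => S.stageCostPert_succ δ σ x k
      _ = ∑' w, ∑' k, S.P x (σ 0 x) w * S.stageCostPert δ (tail σ 1) (S.f x (σ 0 x) w) k :=
          ENNReal.tsum_comm
      _ = ∑' w, S.P x (σ 0 x) w * S.Jpert δ (tail σ 1) (S.f x (σ 0 x) w) := by
          exact tsum_congr fun w => ENNReal.tsum_mul_left
  rw [h1, S.stageCostPert_zero, ← ENNReal.tsum_add]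
  exact tsum_congr fun w => (mul_add _ _ _).symm

lemma Jpert_eq (δ : ℝ≥0∞) (π : ℕ → X → U) (x : X) :
    S.Jpert δ π x = S.Jcost π x + δ * S.N π x := by
  unfold Jpert Jcost N
  have h1 : ∀ k, S.stageCostPert δ π x k = S.stageCost π x k + δ * S.r π x k := by
    intro k
    unfold stageCostPert stageCost
    have h2 : (fun y => ∑' w, S.P y (π k y) w * (S.g y (π k y) w + if y = S.t then 0 else δ))
        = fun y => (∑' w, S.P y (π k y) w * S.g y (π k y) w) + (if y = S.t then 0 else δ) := by
      funext y
      calc ∑' w, S.P y (π k y) w * (S.g y (π k y) w + if y = S.t then 0 else δ)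
          = ∑' w, (S.P y (π k y) w * S.g y (π k y) w
              + S.P y (π k y) w * if y = S.t then 0 else δ) :=
            tsum_congr fun w => mul_add _ _ _
        _ = (∑' w, S.P y (π k y) w * S.g y (π k y) w)
              + ∑' w, S.P y (π k y) w * if y = S.t then 0 else δ := ENNReal.tsum_add
        _ = (∑' w, S.P y (π k y) w * S.g y (π k y) w) + (if y = S.t then 0 else δ) := by
            rw [tsum_pmf_mul_const]
    rw [h2, S.expect_add_fun, S.expect_ite_const]
  rw [tsum_congr h1, ENNReal.tsum_add, ENNReal.tsum_mul_left]

lemma JhatPert_le (δ : ℝ≥0∞) {π : ℕ → X → U} (hπ : S.IsPolicy π) (x : X) :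
    S.JhatPert δ x ≤ S.Jpert δ π x := iInf₂_le π hπ

/-- The easy direction of Bellman's equation for the perturbed problem. -/
lemma JhatPert_bellman (δ : ℝ≥0∞) (x : X) :
    (⨅ u ∈ S.Uc x, ∑' w, S.P x u w *
        (S.g x u w + (if x = S.t then 0 else δ) + S.JhatPert δ (S.f x u w)))
      ≤ S.JhatPert δ x := by
  refine le_iInf₂ fun π hπ => ?_
  calc (⨅ u ∈ S.Uc x, ∑' w, S.P x u w *
          (S.g x u w + (if x = S.t then 0 else δ) + S.JhatPert δ (S.f x u w)))
      ≤ ∑' w, S.P x (π 0 x) w *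
          (S.g x (π 0 x) w + (if x = S.t then 0 else δ) + S.JhatPert δ (S.f x (π 0 x) w)) :=
        iInf₂_le (π 0 x) (hπ 0 x)
    _ ≤ ∑' w, S.P x (π 0 x) w *
          (S.g x (π 0 x) w + (if x = S.t then 0 else δ)
            + S.Jpert δ (tail π 1) (S.f x (π 0 x) w)) := by
        refine ENNReal.tsum_le_tsum fun w => mul_le_mul_right (add_le_add_right ?_ _) _
        exact S.JhatPert_le δ (S.tail_isPolicy hπ 1) _
    _ = S.Jpert δ π x := (S.Jpert_step δ π x).symm

lemma exists_selector (δ ε : ℝ≥0∞) (hε : ε ≠ 0) :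
    ∃ μ : X → U, (∀ y, μ y ∈ S.Uc y) ∧ ∀ y,
      (∑' w, S.P y (μ y) w *
        (S.g y (μ y) w + (if y = S.t then 0 else δ) + S.JhatPert δ (S.f y (μ y) w)))
      ≤ S.JhatPert δ y + ε := by
  have key : ∀ y : X, ∃ u : U, u ∈ S.Uc y ∧
      (∑' w, S.P y u w *
        (S.g y u w + (if y = S.t then 0 else δ) + S.JhatPert δ (S.f y u w)))
      ≤ S.JhatPert δ y + ε := by
    intro y
    by_cases h : S.JhatPert δ y = ⊤
    · obtain ⟨u, hu⟩ := S.Uc_nonempty y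
      exact ⟨u, hu, by rw [h]; simp⟩
    · have h2 : (⨅ u ∈ S.Uc y, ∑' w, S.P y u w *
          (S.g y u w + (if y = S.t then 0 else δ) + S.JhatPert δ (S.f y u w)))
          < S.JhatPert δ y + ε :=
        lt_of_le_of_lt (S.JhatPert_bellman δ y) (ENNReal.lt_add_right h hε)
      rw [iInf_lt_iff] at h2
      obtain ⟨u, hu⟩ := h2
      rw [iInf_lt_iff] at hu
      obtain ⟨hmem, hlt⟩ := hu
      exact ⟨u, hmem, hlt.le⟩
  choose μ hmem hbound using key
  exact ⟨μ, hmem, hbound⟩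

/-- Accumulated form of the approximate fixed point property along an
approximately optimal policy. -/
lemma pert_partial (δ : ℝ≥0∞) (J : X → ℝ≥0∞) :
    ∀ (k : ℕ) (σ : ℕ → X → U) (ε : ℕ → ℝ≥0∞),
      (∀ m y, (∑' w, S.P y (σ m y) w *
          (S.g y (σ m y) w + (if y = S.t then 0 else δ) + J (S.f y (σ m y) w)))
        ≤ J y + ε m) →
      ∀ x, (∑ m ∈ Finset.range k, S.stageCostPert δ σ x m) + S.expect σ x k J
        ≤ J x + ∑ m ∈ Finset.range k, ε m := by
  intro k
  induction k with
  | zero => intro σ ε hsel x; simp [S.expect_zero]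
  | succ k ih =>
      intro σ ε hsel x
      have htail : ∀ m y, (∑' w, S.P y (tail σ 1 m y) w *
          (S.g y (tail σ 1 m y) w + (if y = S.t then 0 else δ)
            + J (S.f y (tail σ 1 m y) w))) ≤ J y + ε (m + 1) := by
        intro m y
        have h3 : tail σ 1 m = σ (m + 1) := by unfold tail; rw [Nat.add_comm]
        rw [h3]
        exact hsel (m + 1) y
      have hIH := ih (tail σ 1) (fun m => ε (m + 1)) htail
      calc (∑ m ∈ Finset.range (k + 1), S.stageCostPert δ σ x m) + S.expect σ x (k + 1) J
          = ((∑ m ∈ Finset.range k, S.stageCostPert δ σ x (m + 1)) + S.stageCostPert δ σ x 0)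
            + S.expect σ x (k + 1) J := by
            rw [Finset.sum_range_succ' (fun m => S.stageCostPert δ σ x m) k]
        _ = S.stageCostPert δ σ x 0 + (∑' w, S.P x (σ 0 x) w *
              ((∑ m ∈ Finset.range k, S.stageCostPert δ (tail σ 1) (S.f x (σ 0 x) w) m)
                + S.expect (tail σ 1) (S.f x (σ 0 x) w) k J)) := by
            have hsum : ∑ m ∈ Finset.range k, S.stageCostPert δ σ x (m + 1)
                = ∑' w, S.P x (σ 0 x) w *
                    ∑ m ∈ Finset.range k, S.stageCostPert δ (tail σ 1) (S.f x (σ 0 x) w) m := by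
              rw [Finset.sum_congr rfl (fun m _ => S.stageCostPert_succ δ σ x m),
                  ← Summable.tsum_finsetSum (fun (m : ℕ) (_ : m ∈ Finset.range k) => ENNReal.summable)]
              exact tsum_congr fun w => (Finset.mul_sum _ _ _).symm
            rw [hsum, S.expect_succ σ x k J]
            rw [add_comm _ (S.stageCostPert δ σ x 0), add_assoc, ← ENNReal.tsum_add]
            exact congrArg _ (tsum_congr fun w => (mul_add _ _ _).symm)
        _ ≤ S.stageCostPert δ σ x 0 + (∑' w, S.P x (σ 0 x) w *
              (J (S.f x (σ 0 x) w) + ∑ m ∈ Finset.range k, ε (m + 1))) := by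
            refine add_le_add_right (ENNReal.tsum_le_tsum fun w => mul_le_mul_right ?_ _) _
            exact hIH (S.f x (σ 0 x) w)
        _ = (∑' w, S.P x (σ 0 x) w *
              (S.g x (σ 0 x) w + (if x = S.t then 0 else δ) + J (S.f x (σ 0 x) w)))
            + ∑ m ∈ Finset.range k, ε (m + 1) := by
            have h5 : ∑' w, S.P x (σ 0 x) w * (J (S.f x (σ 0 x) w)
                + ∑ m ∈ Finset.range k, ε (m + 1))
                = (∑' w, S.P x (σ 0 x) w * J (S.f x (σ 0 x) w))
                  + ∑ m ∈ Finset.range k, ε (m + 1) := by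
              calc ∑' w, S.P x (σ 0 x) w * (J (S.f x (σ 0 x) w) + ∑ m ∈ Finset.range k, ε (m + 1))
                  = ∑' w, (S.P x (σ 0 x) w * J (S.f x (σ 0 x) w)
                      + S.P x (σ 0 x) w * ∑ m ∈ Finset.range k, ε (m + 1)) :=
                    tsum_congr fun w => mul_add _ _ _
                _ = (∑' w, S.P x (σ 0 x) w * J (S.f x (σ 0 x) w))
                      + ∑' w, S.P x (σ 0 x) w * ∑ m ∈ Finset.range k, ε (m + 1) :=
                    ENNReal.tsum_add
                _ = _ := by rw [tsum_pmf_mul_const]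
            have h6 : S.stageCostPert δ σ x 0 + ∑' w, S.P x (σ 0 x) w * J (S.f x (σ 0 x) w)
                = ∑' w, S.P x (σ 0 x) w *
                    (S.g x (σ 0 x) w + (if x = S.t then 0 else δ) + J (S.f x (σ 0 x) w)) := by
              rw [S.stageCostPert_zero, ← ENNReal.tsum_add]
              exact tsum_congr fun w => (mul_add _ _ _).symm
            rw [h5, ← add_assoc, h6]
        _ ≤ (J x + ε 0) + ∑ m ∈ Finset.range k, ε (m + 1) :=
            add_le_add_left (hsel 0 x) _
        _ = J x + ∑ m ∈ Finset.range (k + 1), ε m := by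
            rw [Finset.sum_range_succ' ε k, add_assoc, add_comm (ε 0)]

end SSP
namespace SSP

variable {X U W : Type*} [Countable W] (S : SSP X U W)

lemma exists_good_policy (δ ε : ℝ≥0∞) (hε : ε ≠ 0) :
    ∃ σ : ℕ → X → U, S.IsPolicy σ ∧ ∀ y, S.Jpert δ σ y ≤ S.JhatPert δ y + ε := by
  have h2 : (2 : ℝ≥0∞)⁻¹ ≠ 0 := ENNReal.inv_ne_zero.2 (by norm_num)
  have hgeo : ∑' k : ℕ, ε * 2⁻¹ ^ (k + 1) ≤ ε := by
    rw [ENNReal.tsum_mul_left, ENNReal.tsum_geometric_add_one]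
    have hsub : (1 : ℝ≥0∞) - 2⁻¹ = 2⁻¹ := by
      rw [← ENNReal.inv_two_add_inv_two, ENNReal.add_sub_cancel_right
        (ENNReal.inv_ne_top.2 (by norm_num))]
    rw [hsub, inv_inv]
    rw [show (2 : ℝ≥0∞)⁻¹ * 2 = 1 from ENNReal.inv_mul_cancel (by norm_num) (by norm_num)]
    rw [mul_one]
  have hsel : ∀ k : ℕ, ∃ μ : X → U, (∀ y, μ y ∈ S.Uc y) ∧ ∀ y,
      (∑' w, S.P y (μ y) w *
        (S.g y (μ y) w + (if y = S.t then 0 else δ) + S.JhatPert δ (S.f y (μ y) w)))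
      ≤ S.JhatPert δ y + ε * 2⁻¹ ^ (k + 1) :=
    fun k => S.exists_selector δ _ (mul_ne_zero hε (pow_ne_zero _ h2))
  choose μ hmem hbound using hsel
  refine ⟨fun k => μ k, fun k y => hmem k y, fun y => ?_⟩
  have hpart := S.pert_partial δ (S.JhatPert δ)
  have hk : ∀ k, ∑ m ∈ Finset.range k, S.stageCostPert δ (fun k => μ k) y m
      ≤ S.JhatPert δ y + ε := by
    intro k
    have := hpart k (fun k => μ k) (fun m => ε * 2⁻¹ ^ (m + 1)) (fun m z => hbound m z) y
    refine le_trans (le_trans le_self_add this) ?_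
    exact add_le_add_right (le_trans (ENNReal.sum_le_tsum _) hgeo) _
  show S.Jpert δ (fun k => μ k) y ≤ _
  unfold Jpert
  rw [ENNReal.tsum_eq_iSup_nat]
  exact iSup_le hk

lemma Jhat_le_Jcost {π : ℕ → X → U} {x : X} (hp : S.ProperAt π x) :
    S.Jhat x ≤ S.Jcost π x := iInf₂_le π hp

lemma Jhat_le_JhatPert (δ : ℝ≥0∞) (hδ0 : δ ≠ 0) (x : X) : S.Jhat x ≤ S.JhatPert δ x := by
  by_cases h : S.JhatPert δ x = ⊤
  · simp [h]
  refine ENNReal.le_of_forall_pos_le_add fun ζ hζ hlt => ?_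
  have hζ' : (ζ : ℝ≥0∞) ≠ 0 := by exact_mod_cast hζ.ne'
  obtain ⟨σ, hσpol, hσ⟩ := S.exists_good_policy δ ζ hζ'
  have hfin : S.Jpert δ σ x ≠ ⊤ := by
    refine ne_top_of_le_ne_top ?_ (hσ x)
    exact (ENNReal.add_lt_top.2 ⟨hlt, ENNReal.coe_lt_top⟩).ne
  rw [S.Jpert_eq δ σ x] at hfin
  obtain ⟨hJfin, hNfin⟩ := ENNReal.add_ne_top.1 hfin
  have hN : S.N σ x ≠ ⊤ := by
    intro htop
    rw [htop, ENNReal.mul_top hδ0] at hNfin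
    exact hNfin rfl
  have hp : S.ProperAt σ x :=
    ⟨hσpol, lt_top_iff_ne_top.2 hJfin, lt_top_iff_ne_top.2 hN⟩
  calc S.Jhat x ≤ S.Jcost σ x := S.Jhat_le_Jcost hp
    _ ≤ S.Jcost σ x + δ * S.N σ x := le_self_add
    _ = S.Jpert δ σ x := (S.Jpert_eq δ σ x).symm
    _ ≤ S.JhatPert δ x + ζ := hσ x

lemma JhatPert_mono {δ₁ δ₂ : ℝ≥0∞} (h : δ₁ ≤ δ₂) (x : X) :
    S.JhatPert δ₁ x ≤ S.JhatPert δ₂ x := by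
  refine le_iInf₂ fun π hπ => le_trans (iInf₂_le π hπ) ?_
  refine ENNReal.tsum_le_tsum fun k => S.expect_mono _ _ _ fun y => ?_
  refine ENNReal.tsum_le_tsum fun w => mul_le_mul_right (add_le_add_right ?_ _) _
  split_ifs
  · exact le_rfl
  · exact h

lemma JhatPert_le_Qp (δ : ℝ≥0∞) {x : X} {u : U} (hu : u ∈ S.Uc x) :
    S.JhatPert δ x ≤ ∑' w, S.P x u w *
      (S.g x u w + (if x = S.t then 0 else δ) + S.JhatPert δ (S.f x u w)) := by
  refine ENNReal.le_of_forall_pos_le_add fun ζ hζ hlt => ?_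
  have hζ' : (ζ : ℝ≥0∞) ≠ 0 := by exact_mod_cast hζ.ne'
  obtain ⟨σ, hσpol, hσ⟩ := S.exists_good_policy δ ζ hζ'
  set π' : ℕ → X → U := fun k => match k with
    | 0 => fun y => if y = x then u else σ 0 y
    | (m+1) => σ m with hπ'
  have hpol : S.IsPolicy π' := by
    intro k y
    match k with
    | 0 =>
        show (if y = x then u else σ 0 y) ∈ S.Uc y
        split_ifs with hyx
        · rw [hyx]; exact hu
        · exact hσpol 0 y
    | (m+1) => exact hσpol m y
  have htail : tail π' 1 = σ := by
    funext m z
    show π' (1 + m) z = σ m z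
    rw [Nat.add_comm]
  have h0 : π' 0 x = u := if_pos rfl
  calc S.JhatPert δ x ≤ S.Jpert δ π' x := S.JhatPert_le δ hpol x
    _ = ∑' w, S.P x u w *
        (S.g x u w + (if x = S.t then 0 else δ) + S.Jpert δ σ (S.f x u w)) := by
        rw [S.Jpert_step δ π' x, htail, h0]
    _ ≤ ∑' w, S.P x u w *
        (S.g x u w + (if x = S.t then 0 else δ) + (S.JhatPert δ (S.f x u w) + ζ)) := by
        refine ENNReal.tsum_le_tsum fun w => mul_le_mul_right (add_le_add_right (hσ _) _) _
    _ = (∑' w, S.P x u w *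
        (S.g x u w + (if x = S.t then 0 else δ) + S.JhatPert δ (S.f x u w))) + ζ := by
        calc ∑' w, S.P x u w *
            (S.g x u w + (if x = S.t then 0 else δ) + (S.JhatPert δ (S.f x u w) + ζ))
            = ∑' w, (S.P x u w *
              (S.g x u w + (if x = S.t then 0 else δ) + S.JhatPert δ (S.f x u w))
                + S.P x u w * ζ) := by
              refine tsum_congr fun w => ?_
              rw [← mul_add, ← add_assoc]
          _ = (∑' w, S.P x u w *
              (S.g x u w + (if x = S.t then 0 else δ) + S.JhatPert δ (S.f x u w)))
                + ∑' w, S.P x u w * ζ := ENNReal.tsum_add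
          _ = _ := by rw [tsum_pmf_mul_const]

end SSP
namespace SSP

variable {X U W : Type*} [Countable W] (S : SSP X U W)

lemma tsum_le_sum_add_compl (h : W → ℝ≥0∞) (s : Finset W) :
    ∑' w, h w ≤ (∑ w ∈ s, h w) + ∑' (w : {w // w ∉ s}), h w := by
  have h1 : ∑' (w : {w // w ∉ s}), h w = ∑' w, Set.indicator {w | w ∉ s} h w :=
    tsum_subtype _ _
  have h2 : ∀ w, h w ≤ (if w ∈ s then h w else 0) + Set.indicator {w | w ∉ s} h w := by
    intro w
    rw [Set.indicator_apply]
    by_cases hw : w ∈ s <;> simp [hw]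
  calc ∑' w, h w
      ≤ ∑' w, ((if w ∈ s then h w else 0) + Set.indicator {w | w ∉ s} h w) :=
        ENNReal.tsum_le_tsum h2
    _ = (∑' w, if w ∈ s then h w else 0) + ∑' w, Set.indicator {w | w ∉ s} h w :=
        ENNReal.tsum_add
    _ = (∑ w ∈ s, h w) + ∑' (w : {w // w ∉ s}), h w := by
        rw [← h1, tsum_eq_sum (s := s) (fun b hb => if_neg hb)]
        congr 1
        exact Finset.sum_congr rfl fun w hw => if_pos hw

lemma iInf_tsum_le {F : ℕ → W → ℝ≥0∞} (hanti : ∀ w, Antitone (F · w))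
    (hfin : ∑' w, F 0 w ≠ ⊤) :
    ⨅ n, ∑' w, F n w ≤ ∑' w, ⨅ n, F n w := by
  refine ENNReal.le_of_forall_pos_le_add fun ζ hζ _ => ?_
  obtain ⟨s, hs⟩ : ∃ s : Finset W, ∑' (w : {w // w ∉ s}), F 0 w ≤ ζ := by
    have htend := ENNReal.tendsto_tsum_compl_atTop_zero hfin
    rw [ENNReal.tendsto_atTop_zero] at htend
    obtain ⟨s, hs⟩ := htend ζ (by exact_mod_cast hζ)
    exact ⟨s, hs s le_rfl⟩
  calc ⨅ n, ∑' w, F n w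
      ≤ ⨅ n, ((∑ w ∈ s, F n w) + ζ) := by
        refine le_iInf fun n => (iInf_le _ n).trans ?_
        refine (tsum_le_sum_add_compl (F n) s).trans (add_le_add_right ?_ _)
        exact le_trans (ENNReal.tsum_le_tsum fun w => hanti _ (Nat.zero_le n)) hs
    _ = (⨅ n, ∑ w ∈ s, F n w) + ζ := ENNReal.iInf_add.symm
    _ = (∑ w ∈ s, ⨅ n, F n w) + ζ := by
        rw [ENNReal.iInf_sum (fun t i j => ⟨max i j, fun a _ =>
          ⟨hanti a (le_max_left i j), hanti a (le_max_right i j)⟩⟩)]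
    _ ≤ (∑' w, ⨅ n, F n w) + ζ := add_le_add_left (ENNReal.sum_le_tsum s) _

/-- The vanishing sequence of perturbations. -/
noncomputable def dseq : ℕ → ℝ≥0∞ := fun n => ((n : ℝ≥0∞) + 1)⁻¹

lemma dseq_ne_zero (n : ℕ) : dseq n ≠ 0 :=
  ENNReal.inv_ne_zero.2 (by
    exact ENNReal.add_ne_top.2 ⟨ENNReal.natCast_ne_top n, ENNReal.one_ne_top⟩)

lemma dseq_ne_top (n : ℕ) : dseq n ≠ ⊤ :=
  ENNReal.inv_ne_top.2 (by simp)

lemma dseq_anti : Antitone (dseq) := by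
  intro m n h
  exact ENNReal.inv_le_inv' (add_le_add_left (Nat.cast_le.2 h) 1)

lemma dseq_zero : dseq 0 = 1 := by simp [dseq]

lemma dseq_le (ζ : ℝ≥0∞) (hζ : ζ ≠ 0) : ∃ n, dseq n ≤ ζ := by
  obtain ⟨n, hn⟩ := ENNReal.exists_inv_nat_lt hζ
  refine ⟨n, le_trans (ENNReal.inv_le_inv' ?_) hn.le⟩
  exact le_add_right le_rfl

lemma iInf_JhatPert_eq (y : X) : ⨅ n, S.JhatPert (dseq n) y = S.Jhat y := by
  refine le_antisymm ?_ (le_iInf fun n => S.Jhat_le_JhatPert _ (dseq_ne_zero n) y)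
  by_cases hy : S.Jhat y = ⊤
  · rw [hy]; exact le_top
  refine ENNReal.le_of_forall_pos_le_add fun ζ hζ _ => ?_
  have hζ2 : (ζ : ℝ≥0∞) / 2 ≠ 0 := by
    simp only [ne_eq, ENNReal.div_eq_zero_iff, not_or]
    exact ⟨by exact_mod_cast hζ.ne', by norm_num⟩
  obtain ⟨π, hπ⟩ : ∃ π, (⨅ _ : π ∈ {π | S.ProperAt π y}, S.Jcost π y) < S.Jhat y + ζ / 2 :=
    iInf_lt_iff.1 (ENNReal.lt_add_right hy hζ2)
  obtain ⟨hp, hlt⟩ : ∃ _ : S.ProperAt π y, S.Jcost π y < S.Jhat y + ζ / 2 := iInf_lt_iff.1 hπ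
  obtain ⟨n₀, hn₀⟩ : ∃ n₀, dseq n₀ * S.N π y ≤ (ζ : ℝ≥0∞) / 2 := by
    by_cases hN : S.N π y = 0
    · exact ⟨0, by rw [hN, mul_zero]; exact zero_le⟩
    · have hNt : S.N π y ≠ ⊤ := hp.2.2.ne
      obtain ⟨n₀, hn₀⟩ := dseq_le ((ζ : ℝ≥0∞) / 2 / S.N π y)
        (by intro h0; rcases ENNReal.div_eq_zero_iff.1 h0 with h | h
            exacts [hζ2 h, hNt h])
      refine ⟨n₀, ?_⟩
      calc dseq n₀ * S.N π y ≤ (ζ : ℝ≥0∞) / 2 / S.N π y * S.N π y :=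
            mul_le_mul_left hn₀ _
        _ = (ζ : ℝ≥0∞) / 2 := ENNReal.div_mul_cancel hN hNt
  calc ⨅ n, S.JhatPert (dseq n) y ≤ S.JhatPert (dseq n₀) y := iInf_le _ n₀
    _ ≤ S.Jpert (dseq n₀) π y := S.JhatPert_le _ hp.1 y
    _ = S.Jcost π y + dseq n₀ * S.N π y := S.Jpert_eq _ π y
    _ ≤ (S.Jhat y + ζ / 2) + ζ / 2 := add_le_add hlt.le hn₀
    _ = S.Jhat y + ζ := by rw [add_assoc, ENNReal.add_halves]

lemma Jcost_le_mul (b : ℝ≥0∞) (hbg : ∀ x u w, S.g x u w ≤ b) {π : ℕ → X → U}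
    (hπ : S.IsPolicy π) (x : X) : S.Jcost π x ≤ b * S.N π x := by
  unfold Jcost N
  rw [← ENNReal.tsum_mul_left]
  refine ENNReal.tsum_le_tsum fun k => ?_
  calc S.stageCost π x k ≤ S.expect π x k (fun y => if y = S.t then 0 else b) := by
        refine S.expect_mono _ _ _ fun y => ?_
        by_cases hy : y = S.t
        · subst hy
          simp [S.g_zero _ (hπ k S.t)]
        · rw [if_neg hy]
          refine le_trans (ENNReal.tsum_le_tsum fun w => mul_le_mul_right (hbg _ _ _) _)
            (le_of_eq (tsum_pmf_mul_const _ _))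
    _ = b * S.r π x k := S.expect_ite_const π x k b

end SSP
namespace SSP

variable {X U W : Type*} [Countable W] (S : SSP X U W)

/-- The hard direction of Bellman's equation for `Ĵ`:
`Ĵ(x) ≤ E[g(x,u,w) + Ĵ(f(x,u,w))]` for every feasible control `u`. -/
lemma Jhat_le_Q (hb : S.BoundedCost) (hup : ∃ π : ℕ → X → U, S.UniformlyProper π)
    {x : X} {u : U} (hu : u ∈ S.Uc x) : S.Jhat x ≤ S.Q S.Jhat x u := by
  obtain ⟨b, hbt, hbg⟩ := hb
  obtain ⟨πh, hπhpol, hC⟩ := hup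
  set C := ⨆ x ∈ S.Xhat, S.N πh x with hCdef
  have hCt : C ≠ ⊤ := hC.ne
  -- the uniformly proper policy gives a uniform bound on the perturbed optimal cost on X̂
  have hJP1 : ∀ y, S.Jhat y ≠ ⊤ → ∀ δ, δ ≤ 1 → S.JhatPert δ y ≤ b * C + C := by
    intro y hy δ hδ
    have hyX : y ∈ S.Xhat := lt_top_iff_ne_top.2 hy
    have hNy : S.N πh y ≤ C := le_biSup _ hyX
    calc S.JhatPert δ y ≤ S.Jpert δ πh y := S.JhatPert_le δ hπhpol y
      _ = S.Jcost πh y + δ * S.N πh y := S.Jpert_eq δ πh y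
      _ ≤ b * S.N πh y + 1 * S.N πh y :=
          add_le_add (S.Jcost_le_mul b hbg hπhpol y) (mul_le_mul' hδ le_rfl)
      _ ≤ b * C + C := by
          rw [one_mul]
          exact add_le_add (mul_le_mul_right hNy b) hNy
  by_cases hQ : S.Q S.Jhat x u = ⊤
  · rw [hQ]; exact le_top
  have hsucc : ∀ w, S.P x u w ≠ 0 → S.Jhat (S.f x u w) ≠ ⊤ := by
    intro w hw htop
    apply hQ
    refine top_le_iff.1 ?_
    calc (⊤ : ℝ≥0∞) = S.P x u w * (S.g x u w + S.Jhat (S.f x u w)) := by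
          rw [htop, add_top, ENNReal.mul_top hw]
      _ ≤ S.Q S.Jhat x u := ENNReal.le_tsum w
  set F : ℕ → W → ℝ≥0∞ :=
    fun n w => S.P x u w * (S.g x u w + S.JhatPert (dseq n) (S.f x u w)) with hF
  have hFanti : ∀ w, Antitone (F · w) := fun w m n h =>
    mul_le_mul_right (add_le_add_right (S.JhatPert_mono (dseq_anti h) _) _) _
  have hFinf : ∀ w, ⨅ n, F n w = S.P x u w * (S.g x u w + S.Jhat (S.f x u w)) := by
    intro w
    by_cases hw : S.P x u w = 0
    · simp [hF, hw]
    · rw [show (⨅ n, F n w) = S.P x u w * ⨅ n, (S.g x u w + S.JhatPert (dseq n) (S.f x u w))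
        from (ENNReal.mul_iInf_of_ne hw ((S.P x u).apply_ne_top w)).symm]
      rw [← ENNReal.add_iInf, S.iInf_JhatPert_eq]
  have hfin0 : ∑' w, F 0 w ≠ ⊤ := by
    have hble : ∀ w, F 0 w ≤ S.P x u w * S.g x u w + S.P x u w * (b * C + C) := by
      intro w
      by_cases hw : S.P x u w = 0
      · simp [hF, hw]
      · rw [← mul_add]
        exact mul_le_mul_right (add_le_add_right
          (hJP1 _ (hsucc w hw) (dseq 0) (le_of_eq dseq_zero)) _) _
    refine ne_top_of_le_ne_top ?_ (le_trans (ENNReal.tsum_le_tsum hble) (le_of_eq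
      (by rw [ENNReal.tsum_add, tsum_pmf_mul_const])))
    have hgle : ∑' w, S.P x u w * S.g x u w ≤ S.Q S.Jhat x u :=
      ENNReal.tsum_le_tsum fun w => mul_le_mul_right le_self_add _
    exact (ENNReal.add_lt_top.2 ⟨lt_of_le_of_lt hgle (lt_top_iff_ne_top.2 hQ),
      ENNReal.add_lt_top.2 ⟨ENNReal.mul_lt_top hbt
        (lt_top_iff_ne_top.2 hCt), lt_top_iff_ne_top.2 hCt⟩⟩).ne
  have key2 : ⨅ n, ∑' w, F n w ≤ S.Q S.Jhat x u :=
    le_trans (iInf_tsum_le hFanti hfin0) (le_of_eq (tsum_congr hFinf))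
  have key1 : ∀ n, S.Jhat x ≤ (∑' w, F n w) + dseq n := by
    intro n
    calc S.Jhat x ≤ S.JhatPert (dseq n) x := S.Jhat_le_JhatPert _ (dseq_ne_zero n) x
      _ ≤ ∑' w, S.P x u w * (S.g x u w + (if x = S.t then 0 else dseq n)
            + S.JhatPert (dseq n) (S.f x u w)) := S.JhatPert_le_Qp _ hu
      _ ≤ ∑' w, S.P x u w * ((S.g x u w + S.JhatPert (dseq n) (S.f x u w)) + dseq n) := by
          refine ENNReal.tsum_le_tsum fun w => mul_le_mul_right ?_ _
          rw [add_right_comm]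
          refine add_le_add_right ?_ _
          split_ifs
          · exact zero_le
          · exact le_rfl
      _ = (∑' w, F n w) + dseq n := by
          calc ∑' w, S.P x u w * ((S.g x u w + S.JhatPert (dseq n) (S.f x u w)) + dseq n)
              = ∑' w, (F n w + S.P x u w * dseq n) :=
                tsum_congr fun w => mul_add _ _ _
            _ = (∑' w, F n w) + ∑' w, S.P x u w * dseq n := ENNReal.tsum_add
            _ = (∑' w, F n w) + dseq n := by rw [tsum_pmf_mul_const]
  refine ENNReal.le_of_forall_pos_le_add fun ζ hζ hlt => ?_
  have hζ2 : (ζ : ℝ≥0∞) / 2 ≠ 0 := by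
    intro h0
    rcases ENNReal.div_eq_zero_iff.1 h0 with h | h
    · exact (by exact_mod_cast hζ.ne' : (ζ:ℝ≥0∞) ≠ 0) h
    · norm_num at h
  have hinf_ne : (⨅ n, ∑' w, F n w) ≠ ⊤ := ne_top_of_le_ne_top hQ key2
  obtain ⟨n₀, hn₀⟩ : ∃ n₀, (∑' w, F n₀ w) < (⨅ n, ∑' w, F n w) + ζ / 2 :=
    iInf_lt_iff.1 (ENNReal.lt_add_right hinf_ne hζ2)
  obtain ⟨n₁, hn₁⟩ := dseq_le ((ζ : ℝ≥0∞) / 2) hζ2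
  have hFn : (∑' w, F (max n₀ n₁) w) ≤ ∑' w, F n₀ w :=
    ENNReal.tsum_le_tsum fun w => hFanti w (le_max_left n₀ n₁)
  calc S.Jhat x ≤ (∑' w, F (max n₀ n₁) w) + dseq (max n₀ n₁) := key1 _
    _ ≤ (∑' w, F n₀ w) + dseq n₁ := add_le_add hFn (dseq_anti (le_max_right n₀ n₁))
    _ ≤ ((⨅ n, ∑' w, F n w) + ζ / 2) + ζ / 2 := add_le_add hn₀.le hn₁
    _ ≤ (S.Q S.Jhat x u + ζ / 2) + ζ / 2 := by
        exact add_le_add (add_le_add key2 le_rfl) le_rfl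
    _ = S.Q S.Jhat x u + ζ := by rw [add_assoc, ENNReal.add_halves]

end SSP
/-- If `g` is bounded and a uniformly proper policy exists, value
iteration started from any `J₀ ∈ B` with `J₀ ≥ Ĵ` converges pointwise to `Ĵ`. -/
theorem VI_converges_from_Bset {X U W : Type*} [Countable W] (S : SSP X U W)
    (hb : S.BoundedCost) (hup : ∃ π : ℕ → X → U, S.UniformlyProper π)
    (Jseq : ℕ → X → ℝ≥0∞) (h0 : Jseq 0 ∈ S.Bset) (h0ge : S.Jhat ≤ Jseq 0)
    (hVI : ∀ k x, Jseq (k + 1) x = S.bellman (Jseq k) x) :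
    ∀ x, Tendsto (fun k => Jseq k x) atTop (nhds (S.Jhat x)) := by
  have hlow : ∀ k x, S.Jhat x ≤ Jseq k x := by
    intro k
    induction k with
    | zero => exact fun x => h0ge x
    | succ k ih =>
        intro x
        rw [hVI k x]
        show S.Jhat x ≤ ⨅ u ∈ S.Uc x, S.Q (Jseq k) x u
        refine le_iInf₂ fun u hu => ?_
        exact le_trans (S.Jhat_le_Q hb hup hu) (S.Q_mono (fun y => ih y) x u)
  intro x
  by_cases hx : S.Jhat x = ⊤
  · have heq : (fun k => Jseq k x) = fun _ => S.Jhat x :=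
      funext fun k => le_antisymm (le_top.trans_eq hx.symm) (hlow k x)
    rw [heq]
    exact tendsto_const_nhds
  have hct : (⨆ y ∈ S.Xhat, Jseq 0 y) ≠ ⊤ := h0.2.ne
  refine tendsto_of_le_liminf_of_limsup_le ?_ ?_
  · exact le_liminf_of_le (by isBoundedDefault)
      (Filter.Eventually.of_forall fun k => hlow k x)
  · refine ENNReal.le_of_forall_pos_le_add fun η hη _ => ?_
    have hη' : (η : ℝ≥0∞) ≠ 0 := by exact_mod_cast hη.ne'
    obtain ⟨π, hπ⟩ : ∃ π, (⨅ _ : π ∈ {π | S.ProperAt π x}, S.Jcost π x) < S.Jhat x + η :=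
      iInf_lt_iff.1 (ENNReal.lt_add_right hx hη')
    obtain ⟨hp, hJlt⟩ : ∃ _ : S.ProperAt π x, S.Jcost π x < S.Jhat x + η := iInf_lt_iff.1 hπ
    have hub : ∀ k, Jseq k x ≤ S.Jcost π x + (⨆ y ∈ S.Xhat, Jseq 0 y) * S.r π x k := by
      intro k
      refine le_trans (S.VI_upper Jseq hVI k π hp.1 x) ?_
      refine add_le_add (ENNReal.sum_le_tsum _) ?_
      rw [← S.expect_ite_const π x k _]
      show ∑' y, S.stateDist π x k y * Jseq 0 y
        ≤ ∑' y, S.stateDist π x k y * (if y = S.t then 0 else ⨆ y ∈ S.Xhat, Jseq 0 y)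
      refine ENNReal.tsum_le_tsum fun y => ?_
      by_cases hd : S.stateDist π x k y = 0
      · rw [hd, zero_mul, zero_mul]
      · have hpy := S.tail_properAt hp hd
        have hyX : y ∈ S.Xhat :=
          lt_of_le_of_lt (S.Jhat_le_Jcost hpy) hpy.2.1
        refine mul_le_mul_right ?_ _
        by_cases hyt : y = S.t
        · rw [if_pos hyt, hyt]
          exact le_of_eq h0.1
        · rw [if_neg hyt]
          exact le_biSup _ hyX
    have htend : Tendsto (fun k => S.Jcost π x + (⨆ y ∈ S.Xhat, Jseq 0 y) * S.r π x k)
        atTop (nhds (S.Jcost π x + (⨆ y ∈ S.Xhat, Jseq 0 y) * 0)) :=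
      tendsto_const_nhds.add (ENNReal.Tendsto.const_mul
        (ENNReal.tendsto_atTop_zero_of_tsum_ne_top hp.2.2.ne) (Or.inr hct))
    calc limsup (fun k => Jseq k x) atTop
        ≤ limsup (fun k => S.Jcost π x + (⨆ y ∈ S.Xhat, Jseq 0 y) * S.r π x k) atTop :=
          limsup_le_limsup (Filter.Eventually.of_forall hub)
      _ = S.Jcost π x + (⨆ y ∈ S.Xhat, Jseq 0 y) * 0 := htend.limsup_eq
      _ = S.Jcost π x := by rw [mul_zero, add_zero]
      _ ≤ S.Jhat x + η := hJlt.le
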